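/- arXiv:1507.07236 — 2 statements merged into one kernel-verified Lean document; each statement's English description precedes it below -/
import Mathlib

section
/- For positive integers m ≤ n, the map h/k ↦ (k-h)/k is an order-reversing bijection from F(B(n),m) onto F(B(n),n-m), where F(B(n),m) := {h/k ∈ F_n : m+k-n ≤ h ≤ m}. -/
/-- The Farey sequence of order `n`, as the set of (automatically reduced)
rationals `h/k` with `0 ≤ h ≤ k ≤ n`. -/
def farey (n : ℕ) : Set ℚ := {q | 0 ≤ q ∧ q ≤ 1 ∧ q.den ≤ n}

/-- `F_n^m = {h/k ∈ F_n : h ≤ m}`. -/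
def fareyF (n m : ℕ) : Set ℚ := {q ∈ farey n | q.num ≤ (m : ℤ)}

/-- `G_n^m = {h/k ∈ F_n : m + k - n ≤ h}`. -/
def fareyG (n m : ℕ) : Set ℚ := {q ∈ farey n | (m : ℤ) + q.den - n ≤ q.num}

/-- `F(B(n),m) = {h/k ∈ F_n : m + k - n ≤ h ≤ m}`. -/
def fareyB (n m : ℕ) : Set ℚ :=
  {q ∈ farey n | (m : ℤ) + q.den - n ≤ q.num ∧ q.num ≤ (m : ℤ)}

lemma one_sub_num_den (q : ℚ) : (1 - q).num = (q.den : ℤ) - q.num ∧ (1 - q).den = q.den := by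
  have hd : (0 : ℤ) < q.den := mod_cast q.pos
  have hcop : IsCoprime ((q.den : ℤ) - q.num) (q.den : ℤ) := by
    have h1 : IsCoprime (q.num) (q.den : ℤ) :=
      Int.isCoprime_iff_gcd_eq_one.mpr q.reduced
    have := (h1.neg_left).add_mul_left_left 1
    simpa [mul_one, add_comm, sub_eq_add_neg] using this
  have hcop' : Nat.Coprime ((q.den : ℤ) - q.num).natAbs (q.den : ℤ).natAbs :=
    Int.isCoprime_iff_gcd_eq_one.mp hcop
  have heq : 1 - q = (((q.den : ℤ) - q.num : ℤ) : ℚ) / ((q.den : ℤ) : ℚ) := by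
    push_cast
    rw [sub_div, Rat.num_div_den]
    field_simp
  constructor
  · rw [heq]; exact Rat.num_div_eq_of_coprime hd hcop'
  · rw [heq]; exact_mod_cast Rat.den_div_eq_of_coprime hd hcop'

lemma fareyB_maps {n k : ℕ} (hk : k ≤ n) {q : ℚ} (hq : q ∈ fareyB n k) :
    1 - q ∈ fareyB n (n - k) := by
  obtain ⟨⟨h0, h1, hden⟩, hlo, hhi⟩ := hq
  obtain ⟨hnum, hden'⟩ := one_sub_num_den q
  refine ⟨⟨by linarith, by linarith, by rw [hden']; exact hden⟩, ?_, ?_⟩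
  · rw [hnum, hden']; omega
  · rw [hnum]; omega

/-- `h/k ↦ (k-h)/k` is an order-reversing bijection
`F(B(n),m) → F(B(n),n-m)`. -/
theorem stmt4 (m n : ℕ) (hm : 0 < m) (hmn : m ≤ n) :
    Set.BijOn (fun q : ℚ => 1 - q) (fareyB n m) (fareyB n (n - m)) ∧
    ∀ x ∈ fareyB n m, ∀ y ∈ fareyB n m, x < y → 1 - y < 1 - x := by
  refine ⟨⟨fun q hq => fareyB_maps hmn hq,
    fun x _ y _ h => by simp only at h; linarith, ?_⟩, fun x _ y _ h => by linarith⟩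
  intro y hy
  refine ⟨1 - y, ?_, by ring⟩
  have := fareyB_maps (Nat.sub_le n m) hy
  rwa [Nat.sub_sub_self hmn] at this
end

section
/- For every positive integer m, the map h/k ↦ h/(3h-k) (matrix [[1,0],[3,-1]]) is an order-reversing bijection of F^{≥1/2}(B(2m),m) onto itself. -/
lemma numden (q : ℚ) (hq : 1/2 ≤ q) (hq1 : q ≤ 1) :
    (q / (3*q-1)).num = q.num ∧ ((q / (3*q-1)).den : ℤ) = 3*q.num - q.den := by
  have hle : (1:ℤ) * q.den ≤ q.num * 2 := by
    rw [div_le_iff₀ (by norm_num), ← Rat.num_div_den q, div_mul_eq_mul_div,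
      le_div_iff₀ (by exact_mod_cast q.pos), one_mul] at hq
    have : ((q.den:ℤ):ℚ) ≤ ((q.num * 2 : ℤ):ℚ) := by push_cast; linarith [hq]
    have h2 : (q.den:ℤ) ≤ q.num*2 := by exact_mod_cast this
    omega
  have hnd : q.num ≤ (q.den : ℤ) := by
    rw [← Rat.num_div_den q, div_le_one (by exact_mod_cast q.pos)] at hq1
    exact_mod_cast hq1
  have hd1 : (1:ℤ) ≤ q.den := by exact_mod_cast q.pos
  have hb0 : (0:ℤ) < 3*q.num - q.den := by omega
  have hcop : Nat.Coprime q.num.natAbs (3*q.num - q.den).natAbs := by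
    have h0 : IsCoprime q.num (q.den : ℤ) := by
      rw [Int.isCoprime_iff_gcd_eq_one]
      exact q.reduced
    have h1 : IsCoprime q.num (3*q.num - q.den) := by
      have := (h0.neg_right).add_mul_left_right 3
      convert this using 1
      exacts [rfl, by ring]
    rw [Int.isCoprime_iff_gcd_eq_one] at h1
    exact h1
  have heq : q / (3*q-1) = (q.num : ℚ) / ((3*q.num - q.den : ℤ) : ℚ) := by
    have hd : (q.den : ℚ) ≠ 0 := by exact_mod_cast q.den_nz
    have hb : ((3*q.num - q.den : ℤ) : ℚ) ≠ 0 := by exact_mod_cast hb0.ne'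
    conv_lhs => rw [← Rat.num_div_den q]
    push_cast
    field_simp
  rw [heq]
  exact ⟨Rat.num_div_eq_of_coprime hb0 hcop, Rat.den_div_eq_of_coprime hb0 hcop⟩


/-- `h/k ↦ h/(3h-k)`, i.e. `q ↦ q/(3q-1)`, is an order-reversing bijection of
the upper half of `F(B(2m),m)` onto itself. -/
theorem stmt13 (m : ℕ) (hm : 0 < m) :
    Set.BijOn (fun q : ℚ => q / (3 * q - 1))
      {q ∈ fareyB (2 * m) m | 1 / 2 ≤ q} {q ∈ fareyB (2 * m) m | 1 / 2 ≤ q} ∧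
    ∀ x ∈ {q ∈ fareyB (2 * m) m | 1 / 2 ≤ q},
      ∀ y ∈ {q ∈ fareyB (2 * m) m | 1 / 2 ≤ q}, x < y →
        y / (3 * y - 1) < x / (3 * x - 1) := by
  set S := {q ∈ fareyB (2 * m) m | 1 / 2 ≤ q} with hS
  have hmem : ∀ q ∈ S, q / (3*q-1) ∈ S := by
    rintro q ⟨⟨⟨h0, h1, hden⟩, hg, hf⟩, hh⟩
    obtain ⟨hn, hd⟩ := numden q hh h1
    have hd2 : (0:ℚ) < 3*q-1 := by linarith
    have hnd : q.num ≤ (q.den : ℤ) := by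
      rw [← Rat.num_div_den q, div_le_one (by exact_mod_cast q.pos)] at h1
      exact_mod_cast h1
    refine ⟨⟨⟨div_nonneg (by linarith) hd2.le, ?_, ?_⟩, ?_, ?_⟩, ?_⟩
    · rw [div_le_one hd2]; linarith
    · have : ((q / (3*q-1)).den : ℤ) ≤ (2*m : ℤ) := by rw [hd]; push_cast; omega
      exact_mod_cast this
    · rw [hn, hd]; omega
    · rw [hn]; exact hf
    · rw [le_div_iff₀ hd2]; linarith
  have hinv : ∀ q ∈ S, (q / (3*q-1)) / (3*(q / (3*q-1)) - 1) = q := by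
    rintro q ⟨-, hh⟩
    have h2 : (3*q-1) ≠ 0 := by intro h; rw [sub_eq_zero] at h; nlinarith
    have h3 : 3*(q/(3*q-1)) - 1 = 1/(3*q-1) := by field_simp; ring
    rw [h3, div_div_eq_mul_div, div_one]; exact div_mul_cancel₀ q h2
  refine ⟨Set.InvOn.bijOn ⟨fun q hq => hinv q hq, fun q hq => hinv q hq⟩ hmem hmem, ?_⟩
  rintro x ⟨⟨⟨-, hx1, -⟩, -, -⟩, hx⟩ y ⟨⟨⟨-, hy1, -⟩, -, -⟩, hy⟩ hxy
  have hdx : (0:ℚ) < 3*x-1 := by linarith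
  have hdy : (0:ℚ) < 3*y-1 := by linarith
  rw [div_lt_div_iff₀ hdy hdx]
  nlinarith
end
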